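/- Let E ∈ ℝ and k̂, ε̂ ∈ ℝ³, and define the Gaussian-pulse vector potential a(r,t) = −E · g(2π⟨k̂,r⟩, t) · ε̂ where g(x,t) = ∫_{(−∞, t]} e^{−(x−s)²} cos(x−s) ds. Then for all (r,t) ∈ ℝ³ × ℝ the spatial divergence satisfies Σ_{i=1}^{3} ∂_{r_i} a_i(r,t) = 2π E · e^{−(2π⟨k̂,r⟩ − t)²} cos(2π⟨k̂,r⟩ − t) · ⟨k̂, ε̂⟩. In particular, if ⟨k̂, ε̂⟩ = 0, then the divergence of a vanishes identically. -/

import Mathlib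

open Real MeasureTheory RealInnerProductSpace

private noncomputable def gpF : ℝ → ℝ := fun u => Real.exp (-u ^ 2) * Real.cos u

private lemma gpF_cont : Continuous gpF := by
  unfold gpF
  continuity

private lemma gpF_integrable : Integrable gpF := by
  have h1 : Integrable (fun u : ℝ => Real.exp (-u ^ 2)) := by
    simpa using integrable_exp_neg_mul_sq (b := 1) one_pos
  refine h1.mono' gpF_cont.aestronglyMeasurable ?_
  filter_upwards with u
  show ‖Real.exp (-u ^ 2) * Real.cos u‖ ≤ Real.exp (-u ^ 2)
  rw [Real.norm_eq_abs, abs_mul, abs_of_pos (Real.exp_pos _)]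
  calc Real.exp (-u ^ 2) * |Real.cos u| ≤ Real.exp (-u ^ 2) * 1 :=
        mul_le_mul_of_nonneg_left (abs_cos_le_one u) (Real.exp_pos _).le
    _ = Real.exp (-u ^ 2) := mul_one _

/-- derivative of `x ↦ ∫ u in Iic x, gpF u` -/
private lemma hasDeriv_Iic (x₀ : ℝ) :
    HasDerivAt (fun x => ∫ u in Set.Iic x, gpF u) (gpF x₀) x₀ := by
  have heq : ∀ x, (∫ u in Set.Iic x, gpF u) =
      (∫ u in Set.Iic (0 : ℝ), gpF u) + ∫ u in (0:ℝ)..x, gpF u := by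
    intro x
    rw [← intervalIntegral.integral_Iic_sub_Iic gpF_integrable.integrableOn
      gpF_integrable.integrableOn]
    ring
  have h : HasDerivAt (fun x => ∫ u in (0:ℝ)..x, gpF u) (gpF x₀) x₀ :=
    intervalIntegral.integral_hasDerivAt_right gpF_integrable.intervalIntegrable
      gpF_cont.stronglyMeasurable.stronglyMeasurableAtFilter gpF_cont.continuousAt
  simpa [← heq] using (h.const_add (∫ u in Set.Iic (0 : ℝ), gpF u))

private lemma hasDerivAt_g (g : ℝ → ℝ → ℝ)
    (hg : ∀ x t, g x t = ∫ s in Set.Iic t, Real.exp (-(x - s) ^ 2) * Real.cos (x - s))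
    (t x₀ : ℝ) : HasDerivAt (fun x => g x t) (-gpF (x₀ - t)) x₀ := by
  have key : ∀ x, g x t = (∫ u, gpF u) - ∫ u in Set.Iic (x - t), gpF u := by
    intro x
    rw [hg]
    have h1 : (∫ s in Set.Iic t, Real.exp (-(x - s) ^ 2) * Real.cos (x - s)) =
        ∫ s, (Set.Ici (x - t)).indicator gpF (x - s) := by
      rw [← integral_indicator measurableSet_Iic]
      congr 1
      funext s
      simp only [Set.indicator_apply, Set.mem_Iic, Set.mem_Ici]
      by_cases h : s ≤ t
      · rw [if_pos h, if_pos (by linarith)]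
        rfl
      · rw [if_neg h, if_neg (fun hc => h (by linarith))]
    rw [h1, integral_sub_left_eq_self ((Set.Ici (x - t)).indicator gpF) volume x,
      integral_indicator measurableSet_Ici]
    have h2 : (∫ u in Set.Iio (x - t), gpF u) + (∫ u in Set.Ici (x - t), gpF u) = ∫ u, gpF u :=
      intervalIntegral.integral_Iio_add_Ici gpF_integrable.integrableOn gpF_integrable.integrableOn
    rw [integral_Iic_eq_integral_Iio]
    linarith
  have h : HasDerivAt (fun x : ℝ => ∫ u in Set.Iic (x - t), gpF u) (gpF (x₀ - t)) x₀ := by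
    have hin : HasDerivAt (fun x : ℝ => x - t) 1 x₀ := (hasDerivAt_id x₀).sub_const t
    have h' := (hasDeriv_Iic (x₀ - t)).comp x₀ hin
    rw [mul_one] at h'
    exact h'
  have := (h.const_sub (∫ u, gpF u))
  simp only [← key] at this
  exact this

/-- The spatial divergence of the Gaussian-pulse vector potential
`a(r,t) = −E g(2π⟨k̂,r⟩, t) ε̂`, with `g(x,t) = ∫_{(−∞,t]} e^{−(x−s)²} cos(x−s) ds`, equals
`2πE e^{−(2π⟨k̂,r⟩−t)²} cos(2π⟨k̂,r⟩−t) ⟨k̂,ε̂⟩`; in particular it vanishes identically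
when `⟨k̂,ε̂⟩ = 0`. -/
theorem gaussian_pulse_divergence
    (E : ℝ) (k ε : EuclideanSpace ℝ (Fin 3))
    (g : ℝ → ℝ → ℝ)
    (hg : ∀ x t, g x t = ∫ s in Set.Iic t, Real.exp (-(x - s) ^ 2) * Real.cos (x - s))
    (a : EuclideanSpace ℝ (Fin 3) → ℝ → EuclideanSpace ℝ (Fin 3))
    (ha : ∀ r t, a r t = (-(E * g (2 * Real.pi * ⟪k, r⟫) t)) • ε) :
    (∀ (r : EuclideanSpace ℝ (Fin 3)) (t : ℝ),
      ∑ i : Fin 3, deriv (fun x : ℝ => a (WithLp.toLp 2 (Function.update r i x)) t i) (r i) =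
        2 * Real.pi * E * Real.exp (-(2 * Real.pi * ⟪k, r⟫ - t) ^ 2) *
          Real.cos (2 * Real.pi * ⟪k, r⟫ - t) * ⟪k, ε⟫) ∧
    (⟪k, ε⟫ = 0 → ∀ (r : EuclideanSpace ℝ (Fin 3)) (t : ℝ),
      ∑ i : Fin 3, deriv (fun x : ℝ => a (WithLp.toLp 2 (Function.update r i x)) t i) (r i) = 0) := by
  have main : ∀ (r : EuclideanSpace ℝ (Fin 3)) (t : ℝ),
      ∑ i : Fin 3, deriv (fun x : ℝ => a (WithLp.toLp 2 (Function.update r i x)) t i) (r i) =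
        2 * Real.pi * E * Real.exp (-(2 * Real.pi * ⟪k, r⟫ - t) ^ 2) *
          Real.cos (2 * Real.pi * ⟪k, r⟫ - t) * ⟪k, ε⟫ := by
    intro r t
    have hinner_sum : ⟪k, ε⟫ = ∑ i : Fin 3, k i * ε i := by
      simp [PiLp.inner_apply, RCLike.inner_apply, mul_comm]
    have hupd : ∀ (i : Fin 3) (x : ℝ),
        ⟪k, WithLp.toLp 2 (Function.update r i x)⟫ = ⟪k, r⟫ + k i * (x - r i) := by
      intro i x
      simp only [PiLp.inner_apply, RCLike.inner_apply, starRingEnd_apply, star_trivial]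
      rw [Finset.sum_congr rfl (fun j _ => mul_comm (Function.update r.ofLp i x j) (k.ofLp j)),
        Finset.sum_congr rfl (fun j _ => mul_comm (r.ofLp j) (k.ofLp j))]
      have : ∀ j : Fin 3, k j * Function.update r i x j =
          k j * r j + (if j = i then k i * (x - r i) else 0) := by
        intro j
        by_cases h : j = i
        · subst h; simp [Function.update_apply]; ring
        · simp [Function.update_apply, h]
      rw [Finset.sum_congr rfl (fun j _ => this j), Finset.sum_add_distrib,
        Finset.sum_ite_eq' Finset.univ i (fun _ => k i * (x - r i))]
      simp
    have hderiv : ∀ i : Fin 3,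
        deriv (fun x : ℝ => a (WithLp.toLp 2 (Function.update r i x)) t i) (r i) =
          2 * Real.pi * E * gpF (2 * Real.pi * ⟪k, r⟫ - t) * (k i * ε i) := by
      intro i
      have hfun : (fun x : ℝ => a (WithLp.toLp 2 (Function.update r i x)) t i) =
          fun x => -(E * g (2 * Real.pi * (⟪k, r⟫ + k i * (x - r i))) t) * ε i := by
        funext x
        rw [ha, hupd]
        simp [PiLp.smul_apply, smul_eq_mul]
      rw [hfun]
      have hlin : HasDerivAt (fun x : ℝ => 2 * Real.pi * (⟪k, r⟫ + k i * (x - r i)))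
          (2 * Real.pi * k i) (r i) := by
        have : HasDerivAt (fun x : ℝ => ⟪k, r⟫ + k i * (x - r i)) (k i) (r i) := by
          simpa using (((hasDerivAt_id (r i)).sub_const (r i)).const_mul (k i)).const_add ⟪k, r⟫
        simpa [mul_comm, mul_assoc] using this.const_mul (2 * Real.pi)
      have hgd : HasDerivAt (fun x => g x t) (-gpF (2 * Real.pi * ⟪k, r⟫ - t))
          (2 * Real.pi * (⟪k, r⟫ + k i * (r i - r i))) := by
        simpa using hasDerivAt_g g hg t (2 * Real.pi * ⟪k, r⟫)
      have hcomp := (hgd.comp (r i) hlin)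
      have hfinal := ((hcomp.const_mul E).neg.mul_const (ε i))
      have hfinal' : HasDerivAt
          (fun x => -(E * g (2 * Real.pi * (⟪k, r⟫ + k i * (x - r i))) t) * ε i)
          (-(E * (-gpF (2 * Real.pi * ⟪k, r⟫ - t) * (2 * Real.pi * k i))) * ε i) (r i) := by
        simpa [Function.comp] using hfinal
      rw [hfinal'.deriv]
      ring
    rw [Finset.sum_congr rfl (fun i _ => hderiv i), ← Finset.mul_sum, hinner_sum]
    unfold gpF
    ring
  exact ⟨main, fun h r t => by rw [main r t, h, mul_zero]⟩
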